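/- Discounted value upper bound after log-many segments: if γ^x = 1/2, then the discounted value of any rewards collected after traveling distance log₂(n)·x is at most (number of remaining rewards)·γ^{log₂(n)·x} ≤ n·(1/n) = 1, hence some segment of length x contains at least OPT/log₂(n) of the optimal value (minus 1). -/

import Mathlib

/-- Discounted value after log-many segments: if `γ^x = 1/2`, the value
collected after the first `L = log₂ n` segments is at most `1`; hence if
`OPT ≥ 2` some single segment contributes at least `(OPT−1)/L ≥ OPT/(2L)`. -/
theorem segment_value_bound (γ : ℝ) (hγ : γ ∈ Set.Ioo (0:ℝ) 1)
    (x : ℝ) (hx : γ ^ x = 1/2) (n : ℕ) (hn : 2 ≤ n)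
    (M : ℕ) (v : ℕ → ℝ) (m : ℕ → ℕ)
    (hv0 : ∀ j, 0 ≤ v j)
    (hvm : ∀ j, v j ≤ (m j : ℝ) * γ ^ ((j:ℝ) * x))
    (hm : ∑ j ∈ Finset.range M, m j ≤ n)
    (L : ℕ) (hL : n = 2^L) (hLM : L ≤ M)
    (OPT : ℝ) (hOPT : OPT = ∑ j ∈ Finset.range M, v j) (hOPT2 : 2 ≤ OPT) :
    (∑ j ∈ Finset.Ico L M, v j ≤ 1) ∧
      ∃ j < L, v j ≥ (OPT - 1) / L ∧ (OPT - 1) / L ≥ OPT / (2*L) := by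
  have hγ0 : (0:ℝ) < γ := hγ.1
  have hpow : ∀ j : ℕ, γ ^ ((j:ℝ) * x) = (1/2:ℝ)^j := by
    intro j
    rw [mul_comm, Real.rpow_mul hγ0.le, hx, Real.rpow_natCast]
  have hnpos : (0:ℝ) < (n:ℝ) := by positivity
  have hvj : ∀ j, L ≤ j → v j ≤ (m j : ℝ) / n := by
    intro j hj
    refine le_trans (hvm j) ?_
    rw [hpow, div_eq_mul_inv]
    apply mul_le_mul_of_nonneg_left _ (Nat.cast_nonneg _)
    have hinv : ((n:ℝ))⁻¹ = (1/2:ℝ)^L := by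
      rw [hL]; push_cast; rw [one_div, inv_pow]
    rw [hinv]
    exact pow_le_pow_of_le_one (by norm_num) (by norm_num) hj
  have hsub : ∑ j ∈ Finset.Ico L M, (m j : ℝ) ≤ (n:ℝ) := by
    have h2 : ∑ j ∈ Finset.Ico L M, m j ≤ ∑ j ∈ Finset.range M, m j := by
      rw [Finset.range_eq_Ico]
      exact Finset.sum_le_sum_of_subset (Finset.Ico_subset_Ico (Nat.zero_le _) le_rfl)
    exact_mod_cast le_trans h2 hm
  have h1 : ∑ j ∈ Finset.Ico L M, v j ≤ 1 := by
    calc ∑ j ∈ Finset.Ico L M, v j ≤ ∑ j ∈ Finset.Ico L M, (m j : ℝ) / n := by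
          apply Finset.sum_le_sum
          intro j hj
          exact hvj j (Finset.mem_Ico.mp hj).1
      _ = (∑ j ∈ Finset.Ico L M, (m j : ℝ)) / n := by rw [Finset.sum_div]
      _ ≤ (n:ℝ) / n := by gcongr
      _ = 1 := div_self hnpos.ne'
  refine ⟨h1, ?_⟩
  have hL1 : 1 ≤ L := by
    by_contra h
    interval_cases L
    simp at hL; omega
  have hLpos : (0:ℝ) < (L:ℝ) := by exact_mod_cast hL1
  have hsplit : OPT = (∑ j ∈ Finset.range L, v j) + ∑ j ∈ Finset.Ico L M, v j := by
    rw [hOPT, Finset.range_eq_Ico,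
      ← Finset.sum_Ico_consecutive _ (Nat.zero_le L) hLM, ← Finset.range_eq_Ico]
  have hhead : OPT - 1 ≤ ∑ j ∈ Finset.range L, v j := by linarith
  -- pigeonhole
  obtain ⟨j, hjL, hj⟩ : ∃ j < L, (OPT - 1) / L ≤ v j := by
    by_contra h
    push_neg at h
    have : ∑ j ∈ Finset.range L, v j < ∑ j ∈ Finset.range L, (OPT - 1) / L := by
      apply Finset.sum_lt_sum_of_nonempty
      · exact Finset.nonempty_range_iff.mpr (by omega)
      · intro j hj; exact h j (Finset.mem_range.mp hj)
    rw [Finset.sum_const, Finset.card_range, nsmul_eq_mul,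
      mul_div_cancel₀ _ hLpos.ne'] at this
    linarith
  refine ⟨j, hjL, hj, ?_⟩
  rw [ge_iff_le, div_le_div_iff₀ (by positivity) hLpos]
  ring_nf
  nlinarith [hLpos]
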